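/- arXiv:2210.08571 — 5 statements merged into one kernel-verified Lean document; each statement's English description precedes it below -/
import Mathlib

section
/- Let Σ be a d×d positive semidefinite matrix with eigenvalues σ₁ ≥ ⋯ ≥ σ_d > 0, let n be a positive integer with Tr(Σ(Σ + λ⋆I)⁻¹) ≤ n for some λ⋆ > 0, and let k⋆ = max{k : σ_k ≥ λ⋆}. Then k⋆ + (1/σ_{k⋆}) ∑_{ℓ > k⋆} σ_ℓ ≤ 2n. -/
open Matrix Finset

/-- if `σ₁ ≥ ⋯ ≥ σ_d > 0`, `Tr(Σ(Σ+λ⋆I)⁻¹) = ∑ σᵢ/(σᵢ+λ⋆) ≤ n` and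
`k⋆` is the largest index with `σ_{k⋆} ≥ λ⋆`, then
`k⋆ + (1/σ_{k⋆}) ∑_{ℓ>k⋆} σ_ℓ ≤ 2n` (indices here are 0-based, so the count
of indices up to `k⋆` is `k⋆ + 1`). -/
theorem stmt1 {d : ℕ} (σ : Fin d → ℝ) (hpos : ∀ i, 0 < σ i)
    (hmono : ∀ i j : Fin d, i ≤ j → σ j ≤ σ i)
    (lam : ℝ) (hlam : 0 < lam) (n : ℕ)
    (htrace : ∑ i, σ i / (σ i + lam) ≤ (n : ℝ))
    (kstar : Fin d) (hk1 : lam ≤ σ kstar) (hk2 : ∀ j, lam ≤ σ j → j ≤ kstar) :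
    ((kstar : ℕ) : ℝ) + 1 +
        (∑ j ∈ Finset.univ.filter (fun j => kstar < j), σ j) / σ kstar ≤ 2 * n := by
  have hks : 0 < σ kstar := hpos kstar
  have hsplit :
      (∑ i ∈ Finset.univ.filter (fun j => j ≤ kstar), σ i / (σ i + lam)) +
        ∑ i ∈ Finset.univ.filter (fun j => ¬ j ≤ kstar), σ i / (σ i + lam) =
        ∑ i, σ i / (σ i + lam) :=
    Finset.sum_filter_add_sum_filter_not _ _ _
  -- first sum lower bound
  have h1 : ((kstar : ℕ) + 1 : ℝ) * (1/2) ≤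
      ∑ i ∈ Finset.univ.filter (fun j => j ≤ kstar), σ i / (σ i + lam) := by
    have hcard : (Finset.univ.filter (fun j => j ≤ kstar)).card = (kstar : ℕ) + 1 := by
      have he : Finset.univ.filter (fun j => j ≤ kstar) = Finset.Iic kstar := by
        ext j; simp
      rw [he, Fin.card_Iic]
    have hbd : ∀ i ∈ Finset.univ.filter (fun j => j ≤ kstar), (1/2 : ℝ) ≤ σ i / (σ i + lam) := by
      intro i hi
      simp only [Finset.mem_filter] at hi
      have hlam' : lam ≤ σ i := le_trans hk1 (hmono i kstar hi.2)
      have hpi := hpos i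
      rw [le_div_iff₀ (by linarith)]
      linarith
    have := Finset.card_nsmul_le_sum _ _ _ hbd
    rw [hcard, nsmul_eq_mul] at this
    push_cast at this ⊢
    linarith
  -- second sum lower bound
  have h2 : (∑ j ∈ Finset.univ.filter (fun j => kstar < j), σ j) / (2 * σ kstar) ≤
      ∑ i ∈ Finset.univ.filter (fun j => ¬ j ≤ kstar), σ i / (σ i + lam) := by
    have hset : Finset.univ.filter (fun j : Fin d => ¬ j ≤ kstar) =
        Finset.univ.filter (fun j => kstar < j) := by
      ext j; simp [not_le]
    rw [hset, Finset.sum_div]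
    apply Finset.sum_le_sum
    intro i hi
    simp only [Finset.mem_filter] at hi
    have hpi := hpos i
    have hle : σ i ≤ σ kstar := hmono kstar i (le_of_lt hi.2)
    have hli : ¬ lam ≤ σ i := fun h => absurd (hk2 i h) (not_le.mpr hi.2)
    push_neg at hli
    apply div_le_div_of_nonneg_left (le_of_lt hpi) (by linarith)
    linarith
  have : ((kstar : ℕ) + 1 : ℝ) * (1/2) +
      (∑ j ∈ Finset.univ.filter (fun j => kstar < j), σ j) / (2 * σ kstar) ≤ n := by
    calc _ ≤ _ + _ := add_le_add h1 h2
      _ = ∑ i, σ i / (σ i + lam) := hsplit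
      _ ≤ (n : ℝ) := htrace
  have hsum : (∑ j ∈ Finset.univ.filter (fun j => kstar < j), σ j) / (2 * σ kstar) =
      (∑ j ∈ Finset.univ.filter (fun j => kstar < j), σ j) / σ kstar / 2 := by
    rw [div_div, mul_comm]
  rw [hsum] at this
  linarith
end

section
/- Let Σ be a positive definite d×d matrix with eigendecomposition Σ = ∑_i σ_i v_i v_iᵀ where σ₁ ≥ ⋯ ≥ σ_d > 0, let λ⋆ ∈ (σ_{k⋆+1}, σ_{k⋆}] for some 1 ≤ k⋆ < d, let β ∈ ℝ^d, and suppose Tr(Σ²(Σ+λ⋆I)⁻²) ≤ n(1 − 1/c⋆) with c⋆ > 1. Then λ⋆² ⟨β, (Σ+λ⋆I)⁻² Σ β⟩ / (1 − n⁻¹Tr(Σ²(Σ+λ⋆I)⁻²)) ≤ c⋆ (σ_{k⋆}² ‖β_{≤k⋆}‖²_{Σ⁻¹} + ‖β_{>k⋆}‖²_Σ), where β_{≤k} is the projection of β onto span(v₁,…,v_k), β_{>k} = β − β_{≤k}, ‖x‖²_{Σ⁻¹} = xᵀΣ⁻¹x and ‖x‖²_Σ = xᵀΣx. -/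
open Matrix Finset

lemma vv_mul {d : ℕ} (a b c e : Fin d → ℝ) :
    Matrix.vecMulVec a b * Matrix.vecMulVec c e = (b ⬝ᵥ c) • Matrix.vecMulVec a e := by
  ext i j
  simp only [Matrix.mul_apply, Matrix.vecMulVec_apply, Matrix.smul_apply, dotProduct,
    smul_eq_mul, Finset.sum_mul]
  exact Finset.sum_congr rfl fun k _ => by ring

noncomputable def Pmat {d : ℕ} (v : Fin d → Fin d → ℝ) (f : Fin d → ℝ) :
    Matrix (Fin d) (Fin d) ℝ := ∑ i, f i • Matrix.vecMulVec (v i) (v i)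

lemma Pmat_mul {d : ℕ} (v : Fin d → Fin d → ℝ)
    (horth : ∀ i j : Fin d, v i ⬝ᵥ v j = if i = j then (1 : ℝ) else 0)
    (f g : Fin d → ℝ) : Pmat v f * Pmat v g = Pmat v (f * g) := by
  unfold Pmat
  rw [Finset.sum_mul_sum]
  have h : ∀ i j : Fin d, (f i • Matrix.vecMulVec (v i) (v i)) * (g j • Matrix.vecMulVec (v j) (v j))
      = if i = j then (f i * g i) • Matrix.vecMulVec (v i) (v i) else 0 := by
    intro i j
    rw [smul_mul_assoc, mul_smul_comm, vv_mul, horth]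
    split
    · subst j; simp [smul_smul, mul_comm]
    · simp
  simp_rw [h]
  simp [Finset.sum_ite_eq, Pi.mul_apply]

lemma Pmat_one {d : ℕ} (v : Fin d → Fin d → ℝ)
    (horth : ∀ i j : Fin d, v i ⬝ᵥ v j = if i = j then (1 : ℝ) else 0) :
    Pmat v 1 = 1 := by
  set V : Matrix (Fin d) (Fin d) ℝ := Matrix.of v with hV
  have h1 : V * Vᵀ = 1 := by
    ext i j
    simpa [hV, Matrix.mul_apply, Matrix.one_apply, dotProduct] using horth i j
  have h2 : Vᵀ * V = 1 := mul_eq_one_comm.mp h1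
  rw [← h2]
  ext a b
  simp [Pmat, Matrix.mul_apply, Matrix.vecMulVec_apply, Finset.sum_apply, Matrix.sum_apply,
    hV, mul_comm]

lemma Pmat_mulVec {d : ℕ} (v : Fin d → Fin d → ℝ) (f y : Fin d → ℝ) :
    Pmat v f *ᵥ y = ∑ i, (f i * (v i ⬝ᵥ y)) • v i := by
  funext j
  simp only [Pmat, Matrix.mulVec, dotProduct, Matrix.sum_apply, Matrix.smul_apply,
    Matrix.vecMulVec_apply, smul_eq_mul, Finset.sum_apply, Pi.smul_apply, Finset.sum_mul,
    Finset.mul_sum]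
  rw [Finset.sum_comm]
  exact Finset.sum_congr rfl fun i _ => Finset.sum_congr rfl fun k _ => by ring

lemma Pmat_quad {d : ℕ} (v : Fin d → Fin d → ℝ) (f x y : Fin d → ℝ) :
    x ⬝ᵥ (Pmat v f *ᵥ y) = ∑ i, f i * (v i ⬝ᵥ x) * (v i ⬝ᵥ y) := by
  rw [Pmat_mulVec]
  have h : x ⬝ᵥ (∑ i, (f i * (v i ⬝ᵥ y)) • v i) = ∑ i, (f i * (v i ⬝ᵥ y)) * (x ⬝ᵥ v i) := by
    simp only [dotProduct, Finset.sum_apply, Pi.smul_apply, smul_eq_mul, Finset.mul_sum,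
      Finset.sum_mul]
    rw [Finset.sum_comm]
    exact Finset.sum_congr rfl fun i _ => Finset.sum_congr rfl fun j _ =>
      Finset.sum_congr rfl fun k _ => by ring
  rw [h]
  exact Finset.sum_congr rfl fun i _ => by rw [dotProduct_comm x (v i)]; ring

lemma dotProduct_finsum {d : ℕ} (s : Finset (Fin d)) (x : Fin d → ℝ) (c : Fin d → ℝ)
    (w : Fin d → Fin d → ℝ) :
    x ⬝ᵥ (∑ j ∈ s, c j • w j) = ∑ j ∈ s, c j * (x ⬝ᵥ w j) := by
  simp only [dotProduct, Finset.sum_apply, Pi.smul_apply, smul_eq_mul, Finset.mul_sum]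
  rw [Finset.sum_comm]
  exact Finset.sum_congr rfl fun j _ => Finset.sum_congr rfl fun k _ => by ring

lemma arith1 (lam si sk bi : ℝ) (hsi : 0 < si) (hl : 0 < lam) (h1 : lam ≤ sk) (h2 : sk ≤ si) :
    lam ^ 2 * ((si + lam)⁻¹ * (si + lam)⁻¹ * si * bi ^ 2)
      ≤ sk ^ 2 * (si⁻¹ * bi ^ 2) + si * (0:ℝ) ^ 2 := by
  have hai : (0:ℝ) < si + lam := by positivity
  have key : lam ^ 2 * ((si + lam)⁻¹ * (si + lam)⁻¹ * si) ≤ sk ^ 2 * si⁻¹ := by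
    rw [show lam ^ 2 * ((si + lam)⁻¹ * (si + lam)⁻¹ * si)
        = lam ^ 2 * si / ((si + lam) * (si + lam)) by field_simp]
    rw [show sk ^ 2 * si⁻¹ = sk ^ 2 / si from (div_eq_mul_inv _ _).symm]
    rw [div_le_div_iff₀ (by positivity) hsi]
    have e1 : lam * si ≤ sk * (si + lam) := by nlinarith
    have e2 : (0:ℝ) ≤ lam * si := by positivity
    nlinarith [mul_self_le_mul_self e2 e1]
  nlinarith [mul_le_mul_of_nonneg_right key (sq_nonneg bi)]

lemma arith2 (lam si sk bi : ℝ) (hsi : 0 < si) (hl : 0 < lam) :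
    lam ^ 2 * ((si + lam)⁻¹ * (si + lam)⁻¹ * si * bi ^ 2)
      ≤ sk ^ 2 * (si⁻¹ * (0:ℝ) ^ 2) + si * bi ^ 2 := by
  have hai : (0:ℝ) < si + lam := by positivity
  have key : lam ^ 2 * ((si + lam)⁻¹ * (si + lam)⁻¹ * si) ≤ si := by
    rw [show lam ^ 2 * ((si + lam)⁻¹ * (si + lam)⁻¹ * si)
        = lam ^ 2 * si / ((si + lam) * (si + lam)) by field_simp]
    rw [div_le_iff₀ (by positivity)]
    nlinarith [mul_pos (mul_pos hsi hsi) hsi, mul_pos (mul_pos hsi hsi) hl]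
  nlinarith [mul_le_mul_of_nonneg_right key (sq_nonneg bi)]

/-- bound on the effective bias.  `Σ = ∑ σᵢ vᵢvᵢᵀ` with orthonormal
eigenbasis `v` and decreasing positive eigenvalues `σ` (0-based indexing),
`σ_{k⋆+1} < λ⋆ ≤ σ_{k⋆}`, and `Tr(Σ²(Σ+λ⋆I)⁻²) ≤ n(1 − 1/c⋆)`.  Then
`λ⋆²⟨β,(Σ+λ⋆I)⁻²Σβ⟩/(1 − n⁻¹Tr(Σ²(Σ+λ⋆I)⁻²))
  ≤ c⋆ (σ_{k⋆}² ‖β_{≤k⋆}‖²_{Σ⁻¹} + ‖β_{>k⋆}‖²_Σ)`. -/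
theorem stmt3 {d : ℕ} (σ : Fin d → ℝ) (v : Fin d → Fin d → ℝ)
    (hpos : ∀ i, 0 < σ i) (hmono : ∀ i j : Fin d, i ≤ j → σ j ≤ σ i)
    (horth : ∀ i j : Fin d, v i ⬝ᵥ v j = if i = j then (1 : ℝ) else 0)
    (Sig : Matrix (Fin d) (Fin d) ℝ)
    (hSig : Sig = ∑ i, σ i • Matrix.vecMulVec (v i) (v i))
    (kstar : Fin d) (hklt : (kstar : ℕ) + 1 < d)
    (lam : ℝ) (hlam1 : lam ≤ σ kstar) (hlam2 : σ ⟨(kstar : ℕ) + 1, hklt⟩ < lam)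
    (n : ℕ) (hn : 0 < n) (c : ℝ) (hc : 1 < c)
    (htr : (Sig ^ 2 * ((Sig + lam • 1)⁻¹) ^ 2).trace ≤ (n : ℝ) * (1 - 1 / c))
    (β βle βgt : Fin d → ℝ)
    (hβle : βle = ∑ i ∈ Finset.univ.filter (fun i => i ≤ kstar), (β ⬝ᵥ v i) • v i)
    (hβgt : βgt = β - βle) :
    lam ^ 2 * (β ⬝ᵥ ((((Sig + lam • 1)⁻¹) ^ 2 * Sig) *ᵥ β)) /
        (1 - (1 / (n : ℝ)) * (Sig ^ 2 * ((Sig + lam • 1)⁻¹) ^ 2).trace) ≤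
      c * ((σ kstar) ^ 2 * (βle ⬝ᵥ (Sig⁻¹ *ᵥ βle)) + βgt ⬝ᵥ (Sig *ᵥ βgt)) := by
  have hP1 := Pmat_one v horth
  have hPm := Pmat_mul v horth
  have hlam0 : 0 < lam := (hpos _).trans hlam2
  set b : Fin d → ℝ := fun i => β ⬝ᵥ v i with hb
  have hSigP : Sig = Pmat v σ := hSig
  have hA : Sig + lam • 1 = Pmat v (fun i => σ i + lam) := by
    rw [hSigP, ← hP1]
    unfold Pmat
    rw [Finset.smul_sum, ← Finset.sum_add_distrib]
    exact Finset.sum_congr rfl fun i _ => by simp [add_smul, smul_smul]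
  have hane : ∀ i : Fin d, σ i + lam ≠ 0 := fun i =>
    (by have := hpos i; positivity : (0:ℝ) < σ i + lam).ne'
  have hAinv : (Sig + lam • 1)⁻¹ = Pmat v (fun i => (σ i + lam)⁻¹) := by
    apply Matrix.inv_eq_right_inv
    rw [hA, hPm]
    have h : (fun i => σ i + lam) * (fun i => (σ i + lam)⁻¹) = 1 := by
      funext i
      exact mul_inv_cancel₀ (hane i)
    rw [h, hP1]
  have hσne : ∀ i : Fin d, σ i ≠ 0 := fun i => (hpos i).ne'
  have hSiginv : Sig⁻¹ = Pmat v (fun i => (σ i)⁻¹) := by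
    apply Matrix.inv_eq_right_inv
    rw [hSigP, hPm]
    have h : σ * (fun i => (σ i)⁻¹) = 1 := by
      funext i
      exact mul_inv_cancel₀ (hσne i)
    rw [h, hP1]
  have hnum : (((Sig + lam • 1)⁻¹) ^ 2 * Sig)
      = Pmat v (fun i => (σ i + lam)⁻¹ * (σ i + lam)⁻¹ * σ i) := by
    rw [hAinv, hSigP, pow_two, hPm, hPm]
    rfl
  have hquadβ : β ⬝ᵥ ((((Sig + lam • 1)⁻¹) ^ 2 * Sig) *ᵥ β)
      = ∑ i, (σ i + lam)⁻¹ * (σ i + lam)⁻¹ * σ i * (b i) ^ 2 := by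
    rw [hnum, Pmat_quad]
    refine Finset.sum_congr rfl fun i _ => ?_
    rw [dotProduct_comm (v i) β]
    ring
  have hvle : ∀ i, v i ⬝ᵥ βle = if i ≤ kstar then b i else 0 := by
    intro i
    rw [hβle, dotProduct_finsum]
    simp_rw [horth]
    simp only [mul_ite, mul_one, mul_zero]
    rw [Finset.sum_ite_eq]
    simp [Finset.mem_filter, hb]
  have hvgt : ∀ i, v i ⬝ᵥ βgt = if i ≤ kstar then 0 else b i := by
    intro i
    rw [hβgt, dotProduct_sub, hvle, dotProduct_comm]
    split <;> simp [hb]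
  have hquadle : βle ⬝ᵥ (Sig⁻¹ *ᵥ βle)
      = ∑ i, (σ i)⁻¹ * (if i ≤ kstar then b i else 0) ^ 2 := by
    rw [hSiginv, Pmat_quad]
    refine Finset.sum_congr rfl fun i _ => ?_
    rw [hvle]
    ring
  have hquadgt : βgt ⬝ᵥ (Sig *ᵥ βgt)
      = ∑ i, σ i * (if i ≤ kstar then 0 else b i) ^ 2 := by
    rw [hSigP, Pmat_quad]
    refine Finset.sum_congr rfl fun i _ => ?_
    rw [hvgt]
    ring
  rw [hquadβ, hquadle, hquadgt]
  set T := (Sig ^ 2 * ((Sig + lam • 1)⁻¹) ^ 2).trace with hT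
  have hn' : (0:ℝ) < n := Nat.cast_pos.mpr hn
  have hc0 : (0:ℝ) < c := lt_trans one_pos hc
  have hD : 1 / c ≤ 1 - 1 / (n:ℝ) * T := by
    have h1 : 1 / (n:ℝ) * T ≤ 1 / (n:ℝ) * ((n:ℝ) * (1 - 1/c)) :=
      mul_le_mul_of_nonneg_left htr (by positivity)
    have h2 : 1 / (n:ℝ) * ((n:ℝ) * (1 - 1/c)) = 1 - 1/c := by
      field_simp
    linarith
  set S := ∑ i, (σ i + lam)⁻¹ * (σ i + lam)⁻¹ * σ i * (b i) ^ 2 with hS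
  have hS0 : 0 ≤ S := by
    apply Finset.sum_nonneg
    intro i _
    have h1 := hpos i
    have h2 : (0:ℝ) < σ i + lam := by positivity
    positivity
  have hN0 : 0 ≤ lam ^ 2 * S := by positivity
  have step1 : lam ^ 2 * S / (1 - 1 / (n:ℝ) * T) ≤ lam ^ 2 * S * c := by
    have h1 : lam ^ 2 * S / (1 - 1 / (n:ℝ) * T) ≤ lam ^ 2 * S / (1 / c) :=
      div_le_div_of_nonneg_left hN0 (by positivity) hD
    rw [div_div_eq_mul_div, div_one] at h1
    exact h1
  refine le_trans step1 ?_
  rw [mul_comm (lam ^ 2 * S) c]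
  apply mul_le_mul_of_nonneg_left _ hc0.le
  rw [hS, Finset.mul_sum, Finset.mul_sum, ← Finset.sum_add_distrib]
  apply Finset.sum_le_sum
  intro i _
  by_cases hik : i ≤ kstar
  · simp only [hik, if_true]
    exact arith1 lam (σ i) (σ kstar) (b i) (hpos i) hlam0 hlam1 (hmono i kstar hik)
  · simp only [hik, if_false]
    exact arith2 lam (σ i) (σ kstar) (b i) (hpos i) hlam0
end

section
/- Fix ζ > 0 and μ ≥ 0, let Σ be a positive semidefinite matrix with Tr(Σ) < ∞, and consider the fixed point equation μ⋆ = μ + n/(1 + Tr(Σ(ζI + μ⋆Σ)⁻¹)) for μ⋆ > μ. This equation has a unique solution μ⋆(ζ, μ) on (μ, ∞). -/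
open Matrix

lemma trace_formula {d : ℕ} (Sig : Matrix (Fin d) (Fin d) ℝ) (hSig : Sig.PosSemidef)
    (ζ t : ℝ) (hζ : 0 < ζ) (ht : 0 ≤ t) :
    (Sig * (ζ • (1 : Matrix (Fin d) (Fin d) ℝ) + t • Sig)⁻¹).trace
      = ∑ i, hSig.1.eigenvalues i / (ζ + t * hSig.1.eigenvalues i) := by
  have hH := hSig.1
  set lam := hH.eigenvalues with hlam
  set U : Matrix (Fin d) (Fin d) ℝ := (hH.eigenvectorUnitary : Matrix (Fin d) (Fin d) ℝ) with hU
  have hUU : star U * U = 1 := Unitary.coe_star_mul_self hH.eigenvectorUnitary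
  have hU2 : U * star U = 1 := Unitary.coe_mul_star_self hH.eigenvectorUnitary
  have hpos : ∀ i, 0 < ζ + t * lam i := fun i =>
    add_pos_of_pos_of_nonneg hζ (mul_nonneg ht (hSig.eigenvalues_nonneg i))
  have hspec : Sig = U * diagonal lam * star U := by
    have := hH.spectral_theorem
    simpa [RCLike.ofReal_real_eq_id] using this
  have hA : ζ • (1 : Matrix (Fin d) (Fin d) ℝ) + t • Sig
      = U * diagonal (fun i => ζ + t * lam i) * star U := by
    have hdiag : diagonal (fun i => ζ + t * lam i)
        = ζ • (1 : Matrix (Fin d) (Fin d) ℝ) + t • diagonal lam := by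
      ext i j
      rcases eq_or_ne i j with rfl | h
      · simp [Matrix.one_apply_eq]
      · simp [Matrix.diagonal_apply_ne _ h, Matrix.one_apply_ne h]
    rw [hdiag, Matrix.mul_add, Matrix.add_mul, Matrix.mul_smul, Matrix.smul_mul,
      Matrix.mul_smul, Matrix.smul_mul, Matrix.mul_one, hU2, ← hspec]
  have hinv : (ζ • (1 : Matrix (Fin d) (Fin d) ℝ) + t • Sig)⁻¹
      = U * diagonal (fun i => (ζ + t * lam i)⁻¹) * star U := by
    apply inv_eq_right_inv
    rw [hA]
    calc U * diagonal (fun i => ζ + t * lam i) * star U *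
          (U * diagonal (fun i => (ζ + t * lam i)⁻¹) * star U)
        = U * (diagonal (fun i => ζ + t * lam i) * ((star U * U) *
            diagonal (fun i => (ζ + t * lam i)⁻¹))) * star U := by
          simp only [Matrix.mul_assoc]
      _ = 1 := by
          rw [hUU, Matrix.one_mul, diagonal_mul_diagonal]
          have : (fun i => (ζ + t * lam i) * (ζ + t * lam i)⁻¹) = fun _ => (1:ℝ) := by
            ext i; exact mul_inv_cancel₀ (hpos i).ne'
          rw [this, diagonal_one, Matrix.mul_one, hU2]
  rw [hinv, hspec]
  calc (U * diagonal lam * star U *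
        (U * diagonal (fun i => (ζ + t * lam i)⁻¹) * star U)).trace
      = (U * (diagonal lam * ((star U * U) *
          diagonal (fun i => (ζ + t * lam i)⁻¹))) * star U).trace := by
        simp only [Matrix.mul_assoc]
    _ = ∑ i, lam i / (ζ + t * lam i) := by
        rw [hUU, Matrix.one_mul, diagonal_mul_diagonal, Matrix.trace_mul_cycle,
          hUU, Matrix.one_mul, trace_diagonal]
        simp [div_eq_mul_inv]

/-- for `ζ > 0`, `μ ≥ 0` and `Σ` positive semidefinite, the fixed
point equation `μ⋆ = μ + n/(1 + Tr(Σ(ζI + μ⋆Σ)⁻¹))` has a unique solution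
`μ⋆ > μ`. -/
theorem stmt6 {d : ℕ} (Sig : Matrix (Fin d) (Fin d) ℝ) (hSig : Sig.PosSemidef)
    (n : ℕ) (hn : 0 < n) (ζ μ : ℝ) (hζ : 0 < ζ) (hμ : 0 ≤ μ) :
    ∃! t : ℝ, μ < t ∧
      t = μ + (n : ℝ) /
        (1 + (Sig * (ζ • (1 : Matrix (Fin d) (Fin d) ℝ) + t • Sig)⁻¹).trace) := by
  set lam := hSig.1.eigenvalues with hlam
  have hlam0 : ∀ i, 0 ≤ lam i := hSig.eigenvalues_nonneg
  set g : ℝ → ℝ := fun t => ∑ i, lam i / (ζ + t * lam i) with hg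
  set h : ℝ → ℝ := fun t => (t - μ) * (1 + g t) - n with hh
  have hpos : ∀ t, μ ≤ t → ∀ i, 0 < ζ + t * lam i := fun t ht i =>
    add_pos_of_pos_of_nonneg hζ (mul_nonneg (hμ.trans ht) (hlam0 i))
  have hg0 : ∀ t, μ ≤ t → 0 ≤ g t := by
    intro t ht
    exact Finset.sum_nonneg fun i _ => div_nonneg (hlam0 i) (hpos t ht i).le
  have hg1 : ∀ t, μ ≤ t → 0 < 1 + g t := fun t ht =>
    lt_of_lt_of_le one_pos (le_add_of_nonneg_right (hg0 t ht))
  -- strict monotonicity of h on Ici μ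
  have hmono : StrictMonoOn h (Set.Ici μ) := by
    intro s hs t ht hst
    simp only [hh]
    have key : (s - μ) * g s ≤ (t - μ) * g t := by
      simp only [hg, Finset.mul_sum]
      apply Finset.sum_le_sum
      intro i _
      rw [mul_div_assoc'] at *
      rw [mul_div_assoc', div_le_div_iff₀ (hpos s hs i) (hpos t (hs.trans hst.le) i)]
      nlinarith [mul_nonneg (hlam0 i) (mul_nonneg (sub_nonneg.mpr hst.le)
        (add_nonneg hζ.le (mul_nonneg hμ (hlam0 i))))]
    have hs' : 0 ≤ s - μ := by linarith [hs.out]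
    nlinarith [hg0 s hs, hg0 t (hs.trans hst.le)]
  -- continuity of h on Ici μ
  have hcont : ContinuousOn h (Set.Ici μ) := by
    apply ContinuousOn.sub _ continuousOn_const
    apply ContinuousOn.mul (by fun_prop)
    apply ContinuousOn.add continuousOn_const
    apply continuousOn_finset_sum
    intro i _
    exact ContinuousOn.div continuousOn_const (by fun_prop)
      (fun t ht => (hpos t ht i).ne')
  -- root of h
  set b : ℝ := μ + n + 1 with hb
  have hμb : μ ≤ b := by have : (0:ℝ) ≤ n := Nat.cast_nonneg n; simp only [hb]; linarith
  have hhμ : h μ = -n := by simp [hh]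
  have hhb : 0 < h b := by
    have : (1 : ℝ) ≤ 1 + g b := le_add_of_nonneg_right (hg0 b hμb)
    have hn' : (0:ℝ) < n := by exact_mod_cast hn
    simp only [hh, hb]
    nlinarith [hg0 b hμb]
  obtain ⟨t, htmem, htr⟩ : ∃ t ∈ Set.Icc μ b, h t = 0 := by
    have := intermediate_value_Icc hμb (hcont.mono (Set.Icc_subset_Ici_self))
    apply this
    constructor
    · rw [hhμ]; simp
    · exact hhb.le
  have htμ : μ < t := by
    rcases lt_or_eq_of_le htmem.1 with h1 | h1
    · exact h1
    · exfalso; rw [← h1] at htr; rw [hhμ] at htr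
      have : (0:ℝ) < n := by exact_mod_cast hn
      linarith
  -- equation ↔ h = 0, for s > μ
  have hiff : ∀ s, μ < s →
      ((s = μ + (n : ℝ) / (1 + g s)) ↔ h s = 0) := by
    intro s hs
    have h1 := hg1 s hs.le
    constructor
    · intro he
      have : s - μ = (n : ℝ) / (1 + g s) := by linarith
      simp only [hh]
      rw [this, div_mul_cancel₀ _ h1.ne']
      ring
    · intro he
      have : (s - μ) * (1 + g s) = n := by simp only [hh] at he; linarith
      have : s - μ = (n : ℝ) / (1 + g s) := by
        field_simp
        linarith
      linarith
  have htrace : ∀ s, μ < s →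
      (Sig * (ζ • (1 : Matrix (Fin d) (Fin d) ℝ) + s • Sig)⁻¹).trace = g s := by
    intro s hs
    exact trace_formula Sig hSig ζ s hζ (hμ.trans hs.le)
  refine ⟨t, ⟨htμ, ?_⟩, ?_⟩
  · rw [htrace t htμ]
    exact (hiff t htμ).mpr htr
  · rintro s ⟨hs1, hs2⟩
    rw [htrace s hs1] at hs2
    have hsr : h s = 0 := (hiff s hs1).mp hs2
    exact hmono.injOn (Set.mem_Ici.mpr hs1.le) (Set.mem_Ici.mpr htμ.le) (by rw [hsr, htr])
end

section
/- Fix ζ > 0 and define, for μ ≥ 0, μ⋆(ζ, μ) as the unique solution of μ⋆ = μ + n/(1 + Tr(Σ(ζI + μ⋆Σ)⁻¹)) with μ⋆ > μ. Then the function μ ↦ μ⋆(ζ, μ) is nondecreasing on [0, ∞). -/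
open Matrix

lemma trace_inv_eq {d : ℕ} (Sig : Matrix (Fin d) (Fin d) ℝ) (hSig : Sig.PosSemidef)
    (ζ x : ℝ) (hζ : 0 < ζ) (hx : 0 ≤ x) :
    (Sig * (ζ • (1 : Matrix (Fin d) (Fin d) ℝ) + x • Sig)⁻¹).trace
      = ∑ i, hSig.1.eigenvalues i / (ζ + x * hSig.1.eigenvalues i) := by
  set U : Matrix (Fin d) (Fin d) ℝ := (hSig.1.eigenvectorUnitary : Matrix (Fin d) (Fin d) ℝ)
  set lam : Fin d → ℝ := hSig.1.eigenvalues
  have hlam : ∀ i, 0 ≤ lam i := hSig.eigenvalues_nonneg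
  have hpos : ∀ i, 0 < ζ + x * lam i := fun i =>
    lt_of_lt_of_le hζ (by nlinarith [hlam i])
  have hUU : U * star U = 1 := (Matrix.mem_unitaryGroup_iff).mp hSig.1.eigenvectorUnitary.2
  have hUU' : star U * U = 1 := (Matrix.mem_unitaryGroup_iff').mp hSig.1.eigenvectorUnitary.2
  have hS : Sig = U * diagonal lam * star U := by
    have := hSig.1.spectral_theorem
    simpa using this
  have hA : ζ • (1 : Matrix (Fin d) (Fin d) ℝ) + x • Sig
      = U * diagonal (fun i => ζ + x * lam i) * star U := by
    have : diagonal (fun i => ζ + x * lam i)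
        = ζ • (1 : Matrix (Fin d) (Fin d) ℝ) + x • diagonal lam := by
      rw [smul_eq_diagonal_mul, smul_eq_diagonal_mul]
      simp [diagonal_add, diagonal_mul_diagonal]
    rw [this]
    rw [Matrix.mul_add, Matrix.add_mul, hS]
    congr 1
    · rw [Matrix.mul_smul, Matrix.smul_mul, Matrix.mul_one, hUU]
    · rw [Matrix.mul_smul, Matrix.smul_mul, mul_assoc]
  have hAinv : (ζ • (1 : Matrix (Fin d) (Fin d) ℝ) + x • Sig)⁻¹
      = U * diagonal (fun i => (ζ + x * lam i)⁻¹) * star U := by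
    apply Matrix.inv_eq_right_inv
    rw [hA]
    have hDD : diagonal (fun i => ζ + x * lam i) *
        diagonal (fun i => (ζ + x * lam i)⁻¹) = 1 := by
      rw [diagonal_mul_diagonal]
      have : (fun i => (ζ + x * lam i) * (ζ + x * lam i)⁻¹) = fun _ => (1 : ℝ) := by
        funext i; exact mul_inv_cancel₀ (hpos i).ne'
      rw [this, diagonal_one]
    calc U * diagonal (fun i => ζ + x * lam i) * star U *
          (U * diagonal (fun i => (ζ + x * lam i)⁻¹) * star U)
        = U * diagonal (fun i => ζ + x * lam i) * ((star U * U) *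
            (diagonal (fun i => (ζ + x * lam i)⁻¹) * star U)) := by
          noncomm_ring
      _ = U * (diagonal (fun i => ζ + x * lam i) *
            diagonal (fun i => (ζ + x * lam i)⁻¹)) * star U := by
          rw [hUU', Matrix.one_mul]; noncomm_ring
      _ = 1 := by rw [hDD, Matrix.mul_one, hUU]
  rw [hAinv]
  conv_lhs => rw [hS]
  have : U * diagonal lam * star U * (U * diagonal (fun i => (ζ + x * lam i)⁻¹) * star U)
      = U * (diagonal lam * diagonal (fun i => (ζ + x * lam i)⁻¹)) * star U := by
    have h := hUU'
    calc U * diagonal lam * star U * (U * diagonal (fun i => (ζ + x * lam i)⁻¹) * star U)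
        = U * diagonal lam * ((star U * U) *
            (diagonal (fun i => (ζ + x * lam i)⁻¹) * star U)) := by noncomm_ring
      _ = _ := by rw [h, Matrix.one_mul]; noncomm_ring
  rw [this, Matrix.trace_mul_cycle, ← mul_assoc, hUU', Matrix.one_mul,
    diagonal_mul_diagonal, Matrix.trace_diagonal]
  exact Finset.sum_congr rfl fun i _ => (div_eq_mul_inv _ _).symm

/-- The map `x ↦ (x - μ)(1 + ∑ λᵢ/(ζ + xλᵢ))` is strictly monotone on `[μ, ∞)` when
`0 ≤ μ` and `ζ > 0` and `λᵢ ≥ 0`. -/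
lemma key_mono {d : ℕ} (lam : Fin d → ℝ) (hlam : ∀ i, 0 ≤ lam i) (ζ : ℝ) (hζ : 0 < ζ)
    (μ x y : ℝ) (hμ : 0 ≤ μ) (hx : μ ≤ x) (hxy : x < y) :
    (x - μ) * (1 + ∑ i, lam i / (ζ + x * lam i))
      < (y - μ) * (1 + ∑ i, lam i / (ζ + y * lam i)) := by
  have hx0 : 0 ≤ x := le_trans hμ hx
  have hy0 : 0 ≤ y := le_trans hx0 hxy.le
  have hdx : ∀ i, 0 < ζ + x * lam i := fun i => by nlinarith [hlam i]
  have hdy : ∀ i, 0 < ζ + y * lam i := fun i => by nlinarith [hlam i]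
  have hterm : ∀ i, (x - μ) * (lam i / (ζ + x * lam i))
      ≤ (y - μ) * (lam i / (ζ + y * lam i)) := by
    intro i
    rw [mul_div_assoc' , mul_div_assoc', div_le_div_iff₀ (hdx i) (hdy i)]
    nlinarith [mul_nonneg (mul_nonneg (hlam i) (sub_nonneg.2 hxy.le))
      (show (0:ℝ) ≤ ζ + μ * lam i by nlinarith [hlam i])]
  have hsum : (x - μ) * (∑ i, lam i / (ζ + x * lam i))
      ≤ (y - μ) * (∑ i, lam i / (ζ + y * lam i)) := by
    rw [Finset.mul_sum, Finset.mul_sum]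
    exact Finset.sum_le_sum fun i _ => hterm i
  nlinarith [hsum]

/-- if for every `μ ≥ 0`, `mst μ` is the solution `> μ` of the fixed
point equation `μ⋆ = μ + n/(1 + Tr(Σ(ζI + μ⋆Σ)⁻¹))`, then `μ ↦ mst μ` is
nondecreasing on `[0,∞)`. -/
theorem stmt7 {d : ℕ} (Sig : Matrix (Fin d) (Fin d) ℝ) (hSig : Sig.PosSemidef)
    (n : ℕ) (hn : 0 < n) (ζ : ℝ) (hζ : 0 < ζ)
    (mst : ℝ → ℝ)
    (hfix : ∀ μ : ℝ, 0 ≤ μ → μ < mst μ ∧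
      mst μ = μ + (n : ℝ) /
        (1 + (Sig * (ζ • (1 : Matrix (Fin d) (Fin d) ℝ) + mst μ • Sig)⁻¹).trace)) :
    MonotoneOn mst (Set.Ici (0 : ℝ)) := by
  set lam : Fin d → ℝ := hSig.1.eigenvalues with hlamdef
  have hlam : ∀ i, 0 ≤ lam i := hSig.eigenvalues_nonneg
  intro μ₁ hμ₁ μ₂ hμ₂ h12
  simp only [Set.mem_Ici] at hμ₁ hμ₂
  by_contra hcon
  push_neg at hcon
  obtain ⟨hm1, he1⟩ := hfix μ₁ hμ₁
  obtain ⟨hm2, he2⟩ := hfix μ₂ hμ₂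
  set m₁ := mst μ₁
  set m₂ := mst μ₂
  have hm10 : 0 ≤ m₁ := le_trans hμ₁ hm1.le
  have hm20 : 0 ≤ m₂ := le_trans hμ₂ hm2.le
  have htr1 := trace_inv_eq Sig hSig ζ m₁ hζ hm10
  have htr2 := trace_inv_eq Sig hSig ζ m₂ hζ hm20
  have hdpos : ∀ z : ℝ, 0 ≤ z → 0 < 1 + ∑ i, lam i / (ζ + z * lam i) := by
    intro z hz
    have : 0 ≤ ∑ i, lam i / (ζ + z * lam i) :=
      Finset.sum_nonneg fun i _ => div_nonneg (hlam i) (by nlinarith [hlam i])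
    linarith
  have hH1 : (m₁ - μ₁) * (1 + ∑ i, lam i / (ζ + m₁ * lam i)) = n := by
    have := he1
    rw [htr1] at this
    rw [← hlamdef] at this
    have h := hdpos m₁ hm10
    field_simp at this ⊢
    linarith [this]
  have hH2 : (m₂ - μ₂) * (1 + ∑ i, lam i / (ζ + m₂ * lam i)) = n := by
    have := he2
    rw [htr2] at this
    rw [← hlamdef] at this
    have h := hdpos m₂ hm20
    field_simp at this ⊢
    linarith [this]
  -- m₂ < m₁, both > μ₁ (since m₂ > μ₂ ≥ μ₁)
  have hlt : (m₂ - μ₁) * (1 + ∑ i, lam i / (ζ + m₂ * lam i))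
      < (m₁ - μ₁) * (1 + ∑ i, lam i / (ζ + m₁ * lam i)) :=
    key_mono lam hlam ζ hζ μ₁ m₂ m₁ hμ₁ (le_trans h12 hm2.le) hcon
  have hge : (m₂ - μ₂) * (1 + ∑ i, lam i / (ζ + m₂ * lam i))
      ≤ (m₂ - μ₁) * (1 + ∑ i, lam i / (ζ + m₂ * lam i)) := by
    have := hdpos m₂ hm20
    nlinarith
  rw [hH2] at hge
  rw [hH1] at hlt
  linarith
end

section
/- Let f be (k+1)-times continuously differentiable on [0, kδ] for a positive integer k and δ > 0. Then there exists a constant C_k depending only on k such that |f'(0)| ≤ C_k ( max_{0 ≤ j ≤ k} |f(jδ)| / δ + sup_{t ∈ [0,kδ]} |f^{(k+1)}(t)| · δ^k ). -/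
open scoped Nat


/-- for a `(k+1)`-times continuously differentiable `f` on `[0, kδ]`,
`|f'(0)| ≤ C_k (max_{0≤j≤k} |f(jδ)|/δ + sup_{[0,kδ]} |f^{(k+1)}| · δ^k)`,
where `C_k` depends only on `k`.  (The max and sup are expressed through
arbitrary upper bounds `A` and `M`.) -/
theorem stmt9 (k : ℕ) (hk : 0 < k) :
    ∃ C : ℝ, 0 < C ∧ ∀ δ : ℝ, 0 < δ → ∀ f : ℝ → ℝ,
      ContDiffOn ℝ (k + 1 : ℕ) f (Set.Icc 0 ((k : ℝ) * δ)) →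
      ∀ A M : ℝ,
        (∀ j : ℕ, j ≤ k → |f ((j : ℝ) * δ)| ≤ A) →
        (∀ t ∈ Set.Icc (0 : ℝ) ((k : ℝ) * δ),
          |iteratedDerivWithin (k + 1) f (Set.Icc 0 ((k : ℝ) * δ)) t| ≤ M) →
        |derivWithin f (Set.Icc 0 ((k : ℝ) * δ)) 0| ≤ C * (A / δ + M * δ ^ k) := by
  classical
  set v : Fin (k+1) → ℝ := fun j => (j : ℝ) with hv
  set V := Matrix.vandermonde v with hV
  have hdet : IsUnit V.det := by
    rw [hV, Matrix.det_vandermonde, isUnit_iff_ne_zero]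
    apply Finset.prod_ne_zero_iff.2
    intro i _
    apply Finset.prod_ne_zero_iff.2
    intro j hj
    simp only [Finset.mem_filter, Finset.mem_Ioi] at hj
    have : (i:ℝ) < (j:ℝ) := by exact_mod_cast hj
    simp only [hv]
    linarith
  set e : Fin (k+1) → ℝ := Pi.single ⟨1, by omega⟩ 1 with he
  set c : Fin (k+1) → ℝ := Matrix.vecMul e V⁻¹ with hcdef
  have hc : ∀ i : Fin (k+1), (∑ j, c j * (j : ℝ) ^ (i : ℕ)) =
      if i = (⟨1, by omega⟩ : Fin (k+1)) then 1 else 0 := by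
    have h1 : Matrix.vecMul c V = e := by
      rw [hcdef, Matrix.vecMul_vecMul, Matrix.nonsing_inv_mul V hdet, Matrix.vecMul_one]
    intro i
    have := congrFun h1 i
    rw [Matrix.vecMul, he] at this
    simp only [dotProduct, hV, Matrix.vandermonde, Matrix.of_apply, hv] at this
    rw [this]
    simp [Pi.single_apply]
  set s : ℝ := ∑ j, |c j| with hs
  have hs0 : 0 ≤ s := Finset.sum_nonneg fun j _ => abs_nonneg _
  set K : ℝ := (k : ℝ) ^ (k + 1) with hK
  have hK0 : 0 ≤ K := by positivity
  refine ⟨1 + s * (1 + K), by nlinarith, ?_⟩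
  intro δ hδ f hf A M hA hM
  set S := Set.Icc (0:ℝ) ((k:ℝ)*δ) with hS
  have hkδ : (0:ℝ) < (k:ℝ)*δ := by
    have : (0:ℝ) < (k:ℝ) := by exact_mod_cast hk
    positivity
  have hU : UniqueDiffOn ℝ S := uniqueDiffOn_Icc hkδ
  have h0S : (0:ℝ) ∈ S := Set.left_mem_Icc.2 hkδ.le
  have hA0 : 0 ≤ A := le_trans (abs_nonneg _) (by simpa using hA 0 (Nat.zero_le k))
  have hM0 : 0 ≤ M := le_trans (abs_nonneg _) (hM 0 h0S)
  have hmem : ∀ j : Fin (k+1), ((j:ℝ) * δ) ∈ S := by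
    intro j
    constructor
    · positivity
    · have : (j:ℝ) ≤ (k:ℝ) := by
        have := j.is_le
        exact_mod_cast this
      nlinarith
  -- Taylor polynomial identity
  have hd1 : iteratedDerivWithin 1 f S 0 = derivWithin f S 0 :=
    congrFun iteratedDerivWithin_one 0
  have key : ∑ j : Fin (k+1), c j * taylorWithinEval f k S 0 ((j:ℝ)*δ)
      = δ * derivWithin f S 0 := by
    calc ∑ j : Fin (k+1), c j * taylorWithinEval f k S 0 ((j:ℝ)*δ)
        = ∑ j : Fin (k+1), ∑ i ∈ Finset.range (k+1),
            ((i ! : ℝ)⁻¹ * δ^i * iteratedDerivWithin i f S 0) * (c j * (j:ℝ)^i) := by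
          refine Finset.sum_congr rfl fun j _ => ?_
          rw [taylor_within_apply, Finset.mul_sum]
          refine Finset.sum_congr rfl fun i _ => ?_
          rw [sub_zero, mul_pow, smul_eq_mul]
          ring
      _ = ∑ i ∈ Finset.range (k+1),
            ((i ! : ℝ)⁻¹ * δ^i * iteratedDerivWithin i f S 0) *
              ∑ j : Fin (k+1), (c j * (j:ℝ)^i) := by
          rw [Finset.sum_comm]
          simp [Finset.mul_sum]
      _ = ∑ i : Fin (k+1),
            (((i:ℕ) ! : ℝ)⁻¹ * δ^(i:ℕ) * iteratedDerivWithin (i:ℕ) f S 0) *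
              ∑ j : Fin (k+1), (c j * (j:ℝ)^(i:ℕ)) :=
          (Fin.sum_univ_eq_sum_range (fun i => ((i ! : ℝ)⁻¹ * δ^i *
            iteratedDerivWithin i f S 0) * ∑ j : Fin (k+1), (c j * (j:ℝ)^i)) (k+1)).symm
      _ = δ * derivWithin f S 0 := by
          rw [Finset.sum_congr rfl fun i _ => by rw [hc i]]
          simp only [mul_ite, mul_one, mul_zero, Finset.sum_ite_eq', Finset.mem_univ, if_true]
          rw [hd1]
          norm_num
  -- remainder bounds
  have hRem : ∀ j : Fin (k+1),
      |f ((j:ℝ)*δ) - taylorWithinEval f k S 0 ((j:ℝ)*δ)| ≤ M * K * δ^(k+1) := by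
    intro j
    have hf' : ContDiffOn ℝ ((k:ℕ∞) + 1) f S := by exact_mod_cast hf
    have hb := taylor_mean_remainder_bound hkδ.le hf' (hmem j)
      (fun y hy => by simpa using hM y hy)
    rw [sub_zero] at hb
    refine le_trans hb ?_
    rw [div_le_iff₀ (by positivity : (0:ℝ) < (k ! : ℝ))]
    have h1 : ((j:ℝ)*δ)^(k+1) ≤ ((k:ℝ)*δ)^(k+1) := by
      apply pow_le_pow_left₀ (by positivity)
      have : (j:ℝ) ≤ (k:ℝ) := by exact_mod_cast j.is_le
      nlinarith
    have h2 : (1:ℝ) ≤ (k ! : ℝ) := by exact_mod_cast Nat.one_le_iff_ne_zero.2 k.factorial_ne_zero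
    have h3 : ((k:ℝ)*δ)^(k+1) = K * δ^(k+1) := by rw [hK, mul_pow]
    nlinarith [mul_le_mul_of_nonneg_left h1 hM0,
      mul_nonneg (mul_nonneg hM0 hK0) (pow_nonneg hδ.le (k+1))]
  -- put things together
  have hAj : ∀ j : Fin (k+1), |f ((j:ℝ)*δ)| ≤ A := by
    intro j
    have := hA j (by omega : (j:ℕ) ≤ k)
    exact_mod_cast this
  have hbound : |δ * derivWithin f S 0| ≤ s * A + s * (M * K * δ^(k+1)) := by
    rw [← key]
    have : ∑ j : Fin (k+1), c j * taylorWithinEval f k S 0 ((j:ℝ)*δ)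
        = ∑ j : Fin (k+1), (c j * f ((j:ℝ)*δ)
            - c j * (f ((j:ℝ)*δ) - taylorWithinEval f k S 0 ((j:ℝ)*δ))) := by
      refine Finset.sum_congr rfl fun j _ => ?_
      ring
    rw [this]
    refine le_trans (Finset.abs_sum_le_sum_abs _ _) ?_
    rw [hs, Finset.sum_mul, Finset.sum_mul, ← Finset.sum_add_distrib]
    refine Finset.sum_le_sum fun j _ => ?_
    calc |c j * f ((j:ℝ)*δ) - c j * (f ((j:ℝ)*δ) - taylorWithinEval f k S 0 ((j:ℝ)*δ))|
        ≤ |c j * f ((j:ℝ)*δ)| + |c j * (f ((j:ℝ)*δ) - taylorWithinEval f k S 0 ((j:ℝ)*δ))| :=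
          abs_sub _ _
      _ ≤ |c j| * A + |c j| * (M * K * δ^(k+1)) := by
          rw [abs_mul, abs_mul]
          exact add_le_add (mul_le_mul_of_nonneg_left (hAj j) (abs_nonneg _))
            (mul_le_mul_of_nonneg_left (hRem j) (abs_nonneg _))
  have hδk : (0:ℝ) < δ^k := by positivity
  rw [abs_mul, abs_of_pos hδ] at hbound
  have hD : |derivWithin f S 0| ≤ s * (A/δ) + (s*K) * (M*δ^k) := by
    rw [← sub_nonneg]
    have hδ1 : δ^(k+1) = δ * δ^k := by ring
    have expand : s * (A/δ) + (s*K) * (M*δ^k) - |derivWithin f S 0|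
        = (s * A + s * (M * K * δ^(k+1)) - δ * |derivWithin f S 0|) / δ := by
      field_simp
      ring
    rw [expand]
    apply div_nonneg _ hδ.le
    linarith
  refine le_trans hD ?_
  have ha : 0 ≤ A/δ := by positivity
  have hb : 0 ≤ M*δ^k := by positivity
  nlinarith [mul_nonneg hs0 ha, mul_nonneg (mul_nonneg hs0 hK0) hb,
    mul_nonneg hK0 hb, mul_nonneg hs0 (mul_nonneg hK0 ha)]
end
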